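/- Let n ≥ 1 and let K ⊂ ℂⁿ be compact. There exists a positive integer l depending only on K such that: if z ∈ K satisfies ω(z, 2^j) > 0 for all j and Σ_{j=1}^∞ 2^{−j} log(1/ω(z, 2^j)) = +∞ (i.e. z does not satisfy the Brjuno condition), then for every ε > 0, Σ_{k ∈ ℕ₀, |k| ≥ 1} Σ_{|p| ≤ l(|k|+1), p ∈ ℤ} |log |k·z − p|²|^{n+1+ε} / |k|^{n+1+ε/4} = +∞. -/

import Mathlib

open scoped BigOperators

/-- The index set `ℕ₀ = ⋃_{j=1}^n {k ∈ ℤⁿ : k_i ≥ 0 for i ≠ j, k_j ≥ −1}`. -/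
def brjunoIndexSet (n : ℕ) : Set (Fin n → ℤ) :=
  {k | ∃ j : Fin n, (∀ i, i ≠ j → 0 ≤ k i) ∧ -1 ≤ k j}

/-- `k·z = k₁z₁ + ⋯ + kₙzₙ`. -/
noncomputable def kdot {n : ℕ} (k : Fin n → ℤ) (z : Fin n → ℂ) : ℂ :=
  ∑ i, (k i : ℂ) * z i

/-- `ω(z, m) = min{ |k·z − p| : k ∈ ℕ₀, 1 ≤ |k| ≤ m, p ∈ ℤ }`. -/
noncomputable def brjunoOmega (n : ℕ) (z : Fin n → ℂ) (m : ℕ) : ℝ :=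
  sInf {x | ∃ k ∈ brjunoIndexSet n, ∃ p : ℤ,
    1 ≤ ∑ i, k i ∧ ∑ i, k i ≤ (m : ℤ) ∧ x = ‖kdot k z - (p : ℂ)‖}

private lemma aux_geom_summable (c x : ℝ) (h0 : 0 ≤ x) (h1 : x < 1) :
    Summable (fun j : ℕ => c * x ^ (j + 1)) := by
  have h := (summable_geometric_of_lt_one h0 h1).mul_left (c * x)
  refine h.congr fun j => ?_
  rw [pow_succ]; ring

private lemma aux_rpow_pow (y : ℝ) (j : ℕ) :
    (2 : ℝ) ^ (((j : ℝ) + 1) * y) = ((2 : ℝ) ^ y) ^ (j + 1) := by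
  rw [← Real.rpow_natCast ((2 : ℝ) ^ y) (j + 1), ← Real.rpow_mul (by norm_num)]
  congr 1
  push_cast
  ring

set_option maxHeartbeats 2000000 in
theorem brjuno_nonBrjuno_double_sum_infinite (n : ℕ) (hn : 1 ≤ n)
    (K : Set (EuclideanSpace ℂ (Fin n))) (hK : IsCompact K) :
    ∃ l : ℕ, 0 < l ∧ ∀ z ∈ K,
      (∀ j : ℕ, 1 ≤ j → 0 < brjunoOmega n (fun i => z i) (2 ^ j)) →
      ¬ Summable (fun j : ℕ =>
        (2:ℝ) ^ (-((j:ℝ) + 1)) * Real.log (1 / brjunoOmega n (fun i => z i) (2 ^ (j + 1)))) →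
      ∀ ε : ℝ, 0 < ε →
        ∑' x : {x : (Fin n → ℤ) × ℤ // x.1 ∈ brjunoIndexSet n ∧ 1 ≤ ∑ i, x.1 i ∧
            |x.2| ≤ (l : ℤ) * ((∑ i, x.1 i) + 1)},
          ENNReal.ofReal
            (|Real.log ((‖kdot x.1.1 (fun i => z i) - (x.1.2 : ℂ)‖) ^ 2)|
                ^ ((n:ℝ) + 1 + ε)
              / ((∑ i, x.1.1 i : ℤ) : ℝ) ^ ((n:ℝ) + 1 + ε/4)) = ⊤ := by
  classical
  obtain ⟨C0, hC0⟩ := hK.isBounded.exists_norm_le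
  set C : ℝ := max C0 0 with hCdef
  have hC0' : (0 : ℝ) ≤ C := le_max_right _ _
  have hC : ∀ z ∈ K, ∀ i, ‖z i‖ ≤ C := by
    intro z hz i
    have h1 : ‖z‖ ≤ C := le_trans (hC0 z hz) (le_max_left _ _)
    have h2 : ‖z i‖ ≤ ‖z‖ := by
      rw [EuclideanSpace.norm_eq]
      have hle : ‖z i‖ ^ 2 ≤ ∑ j, ‖z j‖ ^ 2 :=
        Finset.single_le_sum (f := fun j => ‖z j‖ ^ 2) (fun j _ => sq_nonneg _)
          (Finset.mem_univ i)
      calc ‖z i‖ = Real.sqrt (‖z i‖ ^ 2) := by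
            rw [Real.sqrt_sq (norm_nonneg _)]
        _ ≤ _ := Real.sqrt_le_sqrt hle
    exact h2.trans h1
  refine ⟨⌈4 * C⌉₊ + 1, Nat.succ_pos _, ?_⟩
  intro z hz hω hns ε hε
  set l : ℕ := ⌈4 * C⌉₊ + 1 with hl
  set z' : Fin n → ℂ := fun i => z i with hz'
  have hlC : (4 : ℝ) * C ≤ (l : ℝ) := by
    have := Nat.le_ceil (4 * C)
    push_cast [hl]
    linarith
  -- basis vector
  have hn0 : (0 : ℕ) < n := hn
  set j₀ : Fin n := ⟨0, hn0⟩ with hj₀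
  set e : Fin n → ℤ := fun i => if i = j₀ then 1 else 0 with he
  have he_mem : e ∈ brjunoIndexSet n :=
    ⟨j₀, fun i hi => by simp [he, hi], by simp [he]⟩
  have he_sum : ∑ i, e i = 1 := by simp [he]
  have he_dot : kdot e z' = z' j₀ := by
    unfold kdot
    have h : ∀ i, ((e i : ℂ)) * z' i = if i = j₀ then z' j₀ else 0 := by
      intro i; by_cases h : i = j₀ <;> simp [he, h]
    simp [h]
  -- the sets of values
  set A : ℕ → Set ℝ := fun m => {x | ∃ k ∈ brjunoIndexSet n, ∃ p : ℤ,
    1 ≤ ∑ i, k i ∧ ∑ i, k i ≤ (m : ℤ) ∧ x = ‖kdot k z' - (p : ℂ)‖} with hA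
  have hωdef : ∀ m, brjunoOmega n z' m = sInf (A m) := fun m => rfl
  have hbdd : ∀ m, BddBelow (A m) := by
    intro m
    refine ⟨0, ?_⟩
    rintro x ⟨k, -, p, -, -, rfl⟩
    exact norm_nonneg _
  have hAmem : ∀ m : ℕ, 1 ≤ m → ‖z' j₀‖ ∈ A m := by
    intro m hm
    refine ⟨e, he_mem, 0, by rw [he_sum], by rw [he_sum]; exact_mod_cast hm, ?_⟩
    rw [he_dot]; norm_num
  set ω : ℕ → ℝ := fun j => brjunoOmega n z' (2 ^ (j + 1)) with hωf
  have hωpos : ∀ j, 0 < ω j := fun j => hω (j + 1) (Nat.le_add_left _ _)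
  have hωA : ∀ j, ω j = sInf (A (2 ^ (j + 1))) := fun j => hωdef _
  have hωle : ∀ j, ω j ≤ ‖z' j₀‖ := by
    intro j
    rw [hωA]
    exact csInf_le (hbdd _) (hAmem _ Nat.one_le_two_pow)
  have hzj₀pos : 0 < ‖z' j₀‖ := lt_of_lt_of_le (hωpos 0) (hωle 0)
  have hzj₀C : ‖z' j₀‖ ≤ C := hC z hz j₀
  set Lb : ℝ := Real.log (1 / ‖z' j₀‖) with hLb
  have hLlb : ∀ j, Lb ≤ Real.log (1 / ω j) := by
    intro j
    apply Real.log_le_log (by positivity)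
    exact one_div_le_one_div_of_le (hωpos j) (hωle j)
  -- exponents
  set s : ℝ := (n : ℝ) + 1 + ε with hs
  set rr : ℝ := (n : ℝ) + 1 + ε / 4 with hrr
  have hncast : (0 : ℝ) ≤ (n : ℝ) := Nat.cast_nonneg n
  have hspos : 0 < s := by rw [hs]; linarith
  have hrrpos : 0 < rr := by rw [hrr]; linarith
  set θ : ℝ := rr * s⁻¹ with hθ
  have hθ0 : 0 ≤ θ := by
    rw [hθ]; exact mul_nonneg hrrpos.le (inv_nonneg.mpr hspos.le)
  have hθ1 : θ < 1 := by
    rw [hθ, ← div_eq_mul_inv, div_lt_one hspos, hs, hrr]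
    linarith
  by_contra hS
  set S : ENNReal := (∑' x : {x : (Fin n → ℤ) × ℤ // x.1 ∈ brjunoIndexSet n ∧ 1 ≤ ∑ i, x.1 i ∧
      |x.2| ≤ (l : ℤ) * ((∑ i, x.1 i) + 1)},
    ENNReal.ofReal
      (|Real.log ((‖kdot x.1.1 z' - (x.1.2 : ℂ)‖) ^ 2)| ^ s
        / ((∑ i, x.1.1 i : ℤ) : ℝ) ^ rr)) with hSdef
  have hSne : S ≠ ⊤ := hS
  set M : ℝ := S.toReal with hM
  have hM0 : 0 ≤ M := ENNReal.toReal_nonneg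
  -- per-term bound
  have hterm : ∀ (k : Fin n → ℤ) (p : ℤ), k ∈ brjunoIndexSet n → 1 ≤ ∑ i, k i →
      |p| ≤ (l : ℤ) * ((∑ i, k i) + 1) →
      |Real.log ((‖kdot k z' - (p : ℂ)‖) ^ 2)| ^ s
        / ((∑ i, k i : ℤ) : ℝ) ^ rr ≤ M := by
    intro k p h1 h2 h3
    have h0 : ∀ (y : {x : (Fin n → ℤ) × ℤ // x.1 ∈ brjunoIndexSet n ∧ 1 ≤ ∑ i, x.1 i ∧
        |x.2| ≤ (l : ℤ) * ((∑ i, x.1 i) + 1)}),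
        ENNReal.ofReal
          (|Real.log ((‖kdot y.1.1 z' - (y.1.2 : ℂ)‖) ^ 2)| ^ s
            / ((∑ i, y.1.1 i : ℤ) : ℝ) ^ rr) ≤
        (∑' x : {x : (Fin n → ℤ) × ℤ // x.1 ∈ brjunoIndexSet n ∧ 1 ≤ ∑ i, x.1 i ∧
          |x.2| ≤ (l : ℤ) * ((∑ i, x.1 i) + 1)},
        ENNReal.ofReal
          (|Real.log ((‖kdot x.1.1 z' - (x.1.2 : ℂ)‖) ^ 2)| ^ s
            / ((∑ i, x.1.1 i : ℤ) : ℝ) ^ rr)) := fun y => ENNReal.le_tsum y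
    have hle := h0 ⟨(k, p), h1, h2, h3⟩
    rw [← hSdef] at hle
    have hle' : ENNReal.ofReal (|Real.log ((‖kdot k z' - (p : ℂ)‖) ^ 2)| ^ s
        / ((∑ i, k i : ℤ) : ℝ) ^ rr) ≤ S := by simpa using hle
    exact (ENNReal.ofReal_le_iff_le_toReal hSne).mp hle'
  -- main estimate at each scale
  have hLup : ∀ j : ℕ, Real.log (1 / ω j)
      ≤ Real.log 2 + (M ^ s⁻¹ / 2) * (2 : ℝ) ^ (((j : ℝ) + 1) * θ) := by
    intro j
    have hj1 : (1 : ℕ) ≤ 2 ^ (j + 1) := Nat.one_le_two_pow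
    have hlt2 : sInf (A (2 ^ (j + 1))) < 2 * ω j := by
      rw [← hωA]; linarith [hωpos j]
    obtain ⟨v, hvA, hvlt⟩ := exists_lt_of_csInf_lt ⟨_, hAmem _ hj1⟩ hlt2
    obtain ⟨k, hk, p, hk1, hkm, rfl⟩ := hvA
    set vv : ℝ := ‖kdot k z' - (p : ℂ)‖ with hvv
    have hvge : ω j ≤ vv := by
      rw [hωA]
      exact csInf_le (hbdd _) ⟨k, hk, p, hk1, hkm, rfl⟩
    have hvpos : 0 < vv := lt_of_lt_of_le (hωpos j) hvge
    set Sk : ℤ := ∑ i, k i with hSk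
    have hSk1 : (1 : ℤ) ≤ Sk := hk1
    have hSkm : (Sk : ℝ) ≤ (2 : ℝ) ^ (j + 1) := by
      have : Sk ≤ ((2 ^ (j + 1) : ℕ) : ℤ) := hkm
      push_cast at this ⊢
      exact_mod_cast this
    -- ℓ¹ bound on k
    have habs : ∑ i, |k i| ≤ Sk + 2 := by
      obtain ⟨jj, hji, hjj⟩ := hk
      have hpt : ∀ i, |k i| - k i ≤ if i = jj then 2 else 0 := by
        intro i
        by_cases h : i = jj
        · rw [if_pos h, h]
          rcases le_or_gt 0 (k jj) with h' | h'
          · rw [abs_of_nonneg h']; linarith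
          · rw [abs_of_neg h']; linarith [hjj]
        · rw [if_neg h, abs_of_nonneg (hji i h)]; linarith
      have h2' : ∑ i, (|k i| - k i) ≤ 2 := by
        calc ∑ i, (|k i| - k i) ≤ ∑ i, (if i = jj then (2 : ℤ) else 0) :=
              Finset.sum_le_sum (fun i _ => hpt i)
          _ = 2 := by simp
      have h3' : ∑ i, (|k i| - k i) = (∑ i, |k i|) - ∑ i, k i := Finset.sum_sub_distrib _ _
      rw [h3'] at h2'
      omega
    -- bound on |kdot|
    have hkdot : ‖kdot k z'‖ ≤ C * ((Sk : ℝ) + 2) := by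
      calc ‖kdot k z'‖ ≤ ∑ i, ‖(k i : ℂ) * z' i‖ := norm_sum_le _ _
        _ ≤ ∑ i, |(k i : ℝ)| * C := by
            refine Finset.sum_le_sum fun i _ => ?_
            rw [norm_mul]
            have h1 : ‖((k i : ℤ) : ℂ)‖ = |(k i : ℝ)| := by
              rw [show ((k i : ℤ) : ℂ) = (((k i : ℤ) : ℝ) : ℂ) by push_cast; ring,
                Complex.norm_real, Real.norm_eq_abs]
            rw [h1]
            exact mul_le_mul_of_nonneg_left
              (by exact hC z hz i) (abs_nonneg _)
        _ = ((∑ i, |k i| : ℤ) : ℝ) * C := by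
            rw [← Finset.sum_mul]; norm_cast
        _ ≤ ((Sk : ℝ) + 2) * C := by
            have : ((∑ i, |k i| : ℤ) : ℝ) ≤ (Sk : ℝ) + 2 := by exact_mod_cast habs
            exact mul_le_mul_of_nonneg_right this hC0'
        _ = C * ((Sk : ℝ) + 2) := mul_comm _ _
    -- bound on p
    have hvC : vv < 2 * C := lt_of_lt_of_le hvlt (by
      have := (hωle j).trans hzj₀C; linarith)
    have hpreal : |(p : ℝ)| ≤ 4 * C * ((Sk : ℝ) + 1) := by
      have h1 : ‖((p : ℤ) : ℂ)‖ ≤ ‖kdot k z'‖ + ‖kdot k z' - (p : ℂ)‖ := by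
        calc ‖((p : ℤ) : ℂ)‖ = ‖kdot k z' - (kdot k z' - (p : ℂ))‖ := by ring_nf
          _ ≤ _ := norm_sub_le _ _
      have h2 : ‖((p : ℤ) : ℂ)‖ = |(p : ℝ)| := by
        rw [show ((p : ℤ) : ℂ) = (((p : ℤ) : ℝ) : ℂ) by push_cast; ring,
          Complex.norm_real, Real.norm_eq_abs]
      have h3 : ‖kdot k z' - (p : ℂ)‖ = vv := by rw [hvv]
      have h4 : ‖kdot k z'‖ ≤ C * ((Sk : ℝ) + 2) := by
        exact hkdot
      have hSk1' : (1 : ℝ) ≤ (Sk : ℝ) := by exact_mod_cast hSk1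
      have := h1
      rw [h2, h3] at this
      nlinarith [mul_nonneg hC0' (sub_nonneg.mpr hSk1')]
    have hple : |p| ≤ (l : ℤ) * (Sk + 1) := by
      have hSk1' : (1 : ℝ) ≤ (Sk : ℝ) := by exact_mod_cast hSk1
      have h5 : |(p : ℝ)| ≤ (l : ℝ) * ((Sk : ℝ) + 1) := by
        refine hpreal.trans ?_
        exact mul_le_mul_of_nonneg_right hlC (by linarith)
      have h6 : ((|p| : ℤ) : ℝ) ≤ (((l : ℤ) * (Sk + 1) : ℤ) : ℝ) := by
        rw [Int.cast_abs, Int.cast_mul, Int.cast_add, Int.cast_one, Int.cast_natCast]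
        exact h5
      exact_mod_cast h6
    -- extract the bound on the logarithm
    have hMt := hterm k p hk hk1 hple
    have hd1 : (1 : ℝ) ≤ (Sk : ℝ) := by exact_mod_cast hSk1
    have hdpos : (0 : ℝ) < ((Sk : ℤ) : ℝ) ^ rr := Real.rpow_pos_of_pos (by linarith) rr
    have hnum : |Real.log (vv ^ 2)| ^ s ≤ M * (Sk : ℝ) ^ rr := by
      rw [div_le_iff₀ hdpos] at hMt
      exact hMt
    set B : ℝ := |Real.log (vv ^ 2)| with hB
    have hB0 : 0 ≤ B := abs_nonneg _
    have hBle : B ≤ M ^ s⁻¹ * (2 : ℝ) ^ (((j : ℝ) + 1) * θ) := by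
      have e1 : B = (B ^ s) ^ s⁻¹ := (Real.rpow_rpow_inv hB0 hspos.ne').symm
      rw [e1]
      have c1 : (B ^ s) ^ s⁻¹ ≤ (M * (Sk : ℝ) ^ rr) ^ s⁻¹ :=
        Real.rpow_le_rpow (Real.rpow_nonneg hB0 _) hnum (inv_nonneg.mpr hspos.le)
      have c2 : (M * (Sk : ℝ) ^ rr) ^ s⁻¹ = M ^ s⁻¹ * ((Sk : ℝ) ^ rr) ^ s⁻¹ :=
        Real.mul_rpow hM0 (Real.rpow_nonneg (by linarith) _)
      have c3 : ((Sk : ℝ) ^ rr) ^ s⁻¹ = (Sk : ℝ) ^ θ := by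
        rw [hθ, Real.rpow_mul (by linarith : (0:ℝ) ≤ (Sk : ℝ))]
      have c4 : (Sk : ℝ) ^ θ ≤ ((2 : ℝ) ^ (j + 1)) ^ θ :=
        Real.rpow_le_rpow (by linarith) hSkm hθ0
      have c5 : ((2 : ℝ) ^ (j + 1)) ^ θ = (2 : ℝ) ^ (((j : ℝ) + 1) * θ) := by
        rw [← Real.rpow_natCast 2 (j + 1), ← Real.rpow_mul (by norm_num : (0:ℝ) ≤ 2)]
        congr 1
        push_cast
        ring
      calc (B ^ s) ^ s⁻¹ ≤ M ^ s⁻¹ * ((Sk : ℝ) ^ rr) ^ s⁻¹ := by rw [← c2]; exact c1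
        _ = M ^ s⁻¹ * (Sk : ℝ) ^ θ := by rw [c3]
        _ ≤ M ^ s⁻¹ * (2 : ℝ) ^ (((j : ℝ) + 1) * θ) := by
            rw [← c5]
            exact mul_le_mul_of_nonneg_left c4 (Real.rpow_nonneg hM0 _)
    -- log chain
    have hlog1 : Real.log (1 / ω j) < Real.log (2 / vv) := by
      apply Real.log_lt_log (one_div_pos.mpr (hωpos j))
      rw [div_lt_div_iff₀ (hωpos j) hvpos]
      linarith
    have hlog2 : Real.log (2 / vv) = Real.log 2 - Real.log vv :=
      Real.log_div two_ne_zero hvpos.ne'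
    have hlog3 : B = 2 * |Real.log vv| := by
      rw [hB, Real.log_pow]
      push_cast
      rw [abs_mul, abs_two]
    have hlog4 : -Real.log vv ≤ |Real.log vv| := neg_le_abs _
    have : Real.log (1 / ω j) ≤ Real.log 2 + B / 2 := by
      rw [hlog3]
      linarith [hlog1, hlog2.le, hlog4]
    refine this.trans ?_
    linarith [hBle]
  -- summability contradiction
  apply hns
  apply Summable.of_abs
  set c1 : ℝ := M ^ s⁻¹ with hc1
  have hc10 : 0 ≤ c1 := Real.rpow_nonneg hM0 _
  set D : ℝ := |Lb| + Real.log 2 with hD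
  have hD0 : 0 ≤ D := by
    have := Real.log_pos one_lt_two
    have := abs_nonneg Lb
    rw [hD]; linarith
  have hg1 : Summable (fun j : ℕ => D * ((2 : ℝ) ^ (-1 : ℝ)) ^ (j + 1)) :=
    aux_geom_summable D _ (Real.rpow_nonneg (by norm_num) _)
      (Real.rpow_lt_one_of_one_lt_of_neg one_lt_two (by norm_num))
  have hg2 : Summable (fun j : ℕ => (c1 / 2) * ((2 : ℝ) ^ (θ - 1)) ^ (j + 1)) :=
    aux_geom_summable _ _ (Real.rpow_nonneg (by norm_num) _)
      (Real.rpow_lt_one_of_one_lt_of_neg one_lt_two (by linarith))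
  apply Summable.of_nonneg_of_le (fun j => abs_nonneg _) ?_ (hg1.add hg2)
  intro j
  have hpos2 : (0 : ℝ) < (2 : ℝ) ^ (-((j : ℝ) + 1)) := Real.rpow_pos_of_pos two_pos _
  have hU0 : 0 ≤ Real.log 2 + (c1 / 2) * (2 : ℝ) ^ (((j : ℝ) + 1) * θ) := by
    have := Real.log_pos one_lt_two
    have h2 : (0 : ℝ) ≤ (c1 / 2) * (2 : ℝ) ^ (((j : ℝ) + 1) * θ) :=
      mul_nonneg (by linarith) (Real.rpow_pos_of_pos two_pos _).le
    linarith
  have hLabs : |Real.log (1 / ω j)|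
      ≤ |Lb| + (Real.log 2 + (c1 / 2) * (2 : ℝ) ^ (((j : ℝ) + 1) * θ)) := by
    refine abs_le.mpr ⟨?_, ?_⟩
    · have := hLlb j
      have := neg_abs_le Lb
      linarith
    · have := hLup j
      have := abs_nonneg Lb
      linarith
  calc |(2 : ℝ) ^ (-((j : ℝ) + 1)) * Real.log (1 / ω j)|
      = (2 : ℝ) ^ (-((j : ℝ) + 1)) * |Real.log (1 / ω j)| := by
        rw [abs_mul, abs_of_pos hpos2]
    _ ≤ (2 : ℝ) ^ (-((j : ℝ) + 1))
        * (|Lb| + (Real.log 2 + (c1 / 2) * (2 : ℝ) ^ (((j : ℝ) + 1) * θ))) :=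
        mul_le_mul_of_nonneg_left hLabs hpos2.le
    _ = D * (2 : ℝ) ^ (-((j : ℝ) + 1))
        + (c1 / 2) * ((2 : ℝ) ^ (-((j : ℝ) + 1)) * (2 : ℝ) ^ (((j : ℝ) + 1) * θ)) := by
        rw [hD]; ring
    _ = D * ((2 : ℝ) ^ (-1 : ℝ)) ^ (j + 1)
        + (c1 / 2) * ((2 : ℝ) ^ (θ - 1)) ^ (j + 1) := by
        rw [← Real.rpow_add two_pos, ← aux_rpow_pow, ← aux_rpow_pow]
        ring_nf
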